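/- Under the setup of co-located intruders (td(p, e(p)) = 0 and td(e(p), e(q)) = td(p,q)), for any message routed from participant p through an arbitrary chain of intruders i₁, …, i_j to participant p' with timestamps satisfying the hop constraints, the same send time t and receive time t' can be realized by the two-intruder route p → e(p) → e(p') → p': i.e., there exist intermediate timestamps making all hop constraints of the two-intruder route hold with the same endpoints t, t'. -/

import Mathlib

/-- Sum of travel times along the path `a, L..., a'`. -/
def pathSum {A : Type*} (td : A → A → ℝ) : A → List A → A → ℝ
  | a, [], a' => td a a'
  | a, b :: L, a' => td a b + pathSum td b L a'

lemma chain_key {A : Type*} (td : A → A → ℝ) :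
    ∀ (j : ℕ) (f : Fin (j + 1) → A) (s : Fin (j + 1) → ℝ) (a a' : A) (t t' : ℝ),
      s 0 ≥ t + td a (f 0) →
      (∀ m : Fin j, s m.succ ≥ s m.castSucc + td (f m.castSucc) (f m.succ)) →
      t' ≥ s (Fin.last j) + td (f (Fin.last j)) a' →
      t' ≥ t + pathSum td a (List.ofFn f) a' := by
  intro j
  induction j with
  | zero =>
    intro f s a a' t t' h0 _ hlast
    have : f (Fin.last 0) = f 0 := rfl
    have hs : s (Fin.last 0) = s 0 := rfl
    rw [this, hs] at hlast
    show t' ≥ t + pathSum td a (List.ofFn f) a'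
    rw [show (List.ofFn f) = [f 0] by simp [List.ofFn_succ]]
    simp only [pathSum]
    linarith
  | succ j ih =>
    intro f s a a' t t' h0 hstep hlast
    have h1 : (s ∘ Fin.succ) 0 ≥ s 0 + td (f 0) ((f ∘ Fin.succ) 0) := by
      have := hstep 0
      simpa using this
    have h2 : ∀ m : Fin j, (s ∘ Fin.succ) m.succ ≥
        (s ∘ Fin.succ) m.castSucc + td ((f ∘ Fin.succ) m.castSucc) ((f ∘ Fin.succ) m.succ) := by
      intro m
      have := hstep m.succ
      simpa only [Function.comp_apply, Fin.succ_castSucc] using this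
    have h3 : t' ≥ (s ∘ Fin.succ) (Fin.last j) +
        td ((f ∘ Fin.succ) (Fin.last j)) a' := by
      simpa [Fin.succ_last] using hlast
    have := ih (f ∘ Fin.succ) (s ∘ Fin.succ) (f 0) a' (s 0) t' h1 h2 h3
    rw [show (List.ofFn f) = f 0 :: List.ofFn (f ∘ Fin.succ) by simp [List.ofFn_succ]]
    simp only [pathSum]
    linarith

theorem stmt_3 {P I : Type*} (td : P ⊕ I → P ⊕ I → ℝ)
    (hGTI : ∀ (a a' : P ⊕ I) (L : List (P ⊕ I)), L ≠ [] → td a a' ≤ pathSum td a L a')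
    (hrefl : ∀ a : P ⊕ I, td a a = 0)
    (e : P → I)
    (hePto : ∀ p : P, td (Sum.inl p) (Sum.inr (e p)) = 0)
    (hePfrom : ∀ p : P, td (Sum.inr (e p)) (Sum.inl p) = 0)
    (heMirror : ∀ p q : P, td (Sum.inr (e p)) (Sum.inr (e q)) = td (Sum.inl p) (Sum.inl q))
    (p p' : P) (t t' : ℝ)
    (j : ℕ) (i : Fin (j + 1) → I) (s : Fin (j + 1) → ℝ)
    (h0 : s 0 ≥ t + td (Sum.inl p) (Sum.inr (i 0)))
    (hstep : ∀ m : Fin j,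
      s m.succ ≥ s m.castSucc + td (Sum.inr (i m.castSucc)) (Sum.inr (i m.succ)))
    (hlast : t' ≥ s (Fin.last j) + td (Sum.inr (i (Fin.last j))) (Sum.inl p')) :
    ∃ u₁ u₂ : ℝ,
      u₁ ≥ t + td (Sum.inl p) (Sum.inr (e p)) ∧
      u₂ ≥ u₁ + td (Sum.inr (e p)) (Sum.inr (e p')) ∧
      t' ≥ u₂ + td (Sum.inr (e p')) (Sum.inl p') := by
  have hchain := chain_key td j (fun m => Sum.inr (i m)) s (Sum.inl p) (Sum.inl p') t t'
    h0 hstep hlast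
  have hne : (List.ofFn (fun m : Fin (j+1) => (Sum.inr (i m) : P ⊕ I))) ≠ [] := by
    simp [List.ofFn_succ]
  have hle := hGTI (Sum.inl p) (Sum.inl p') _ hne
  refine ⟨t, t + td (Sum.inl p) (Sum.inl p'), ?_, ?_, ?_⟩
  · rw [hePto]; linarith
  · rw [heMirror]
  · rw [hePfrom]; linarith
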